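/- Let T > 0, a ∈ ℝ, and C > 0. Let θ, θ̃ : ℝ → ℝ be bounded and measurable, with θ even. Let f, f̃ : ℝ × [0,T] → ℝ be jointly measurable with f nonnegative, ‖f(·,t)‖_{L¹(ℝ)} ≤ C and ‖f̃(·,t)‖_{L¹(ℝ)} ≤ C for all t ∈ [0,T], and let g : ℝ × [0,T] → ℝ be bounded and jointly measurable. Assume: (H1) for every bounded measurable φ : ℝ → ℝ and every t ∈ [0,T], ∫_ℝ f̃(x,t) φ(x) dx = ∫₀^t ∫∫_{ℝ²} [ 2 f̃(x₁,s) f(x₂,s) θ(x₁−x₂) + f(x₁,s) f(x₂,s) θ̃(x₁−x₂) ] · [ 2 φ((x₁+x₂)/2) − φ(x₁) − φ(x₂) ] dx₁ dx₂ ds; and (H2) for every x ∈ ℝ and t ∈ [0,T], g(x,t) = 𝟙[x ≤ a] + ∫_t^T ∫_ℝ 2 f(y,s) θ(x−y) [ 2 g((x+y)/2, s) − g(x,s) − g(y,s) ] dy ds. Then ∫_{−∞}^a f̃(x,T) dx = ∫₀^T ∫∫_{ℝ²} θ̃(x₁−x₂) f(x₁,s) f(x₂,s) [ 2 g((x₁+x₂)/2,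 s) − g(x₁,s) − g(x₂,s) ] dx₁ dx₂ ds. -/

import Mathlib

open MeasureTheory Set
set_option maxHeartbeats 1000000

noncomputable def Lf (θ : ℝ → ℝ) (f g : ℝ → ℝ → ℝ) (x r : ℝ) : ℝ :=
  ∫ y, 2 * f y r * θ (x - y) * (2 * g ((x + y) / 2) r - g x r - g y r)

theorem Lf_def (θ : ℝ → ℝ) (f g : ℝ → ℝ → ℝ) (x r : ℝ) :
    (∫ y, 2 * f y r * θ (x - y) * (2 * g ((x + y) / 2) r - g x r - g y r)) = Lf θ f g x r := rfl

noncomputable def Ef (θ θt : ℝ → ℝ) (f ft g : ℝ → ℝ → ℝ) (s r : ℝ) : ℝ :=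
  ∫ p : ℝ × ℝ, (2 * ft p.1 s * f p.2 s * θ (p.1 - p.2) + f p.1 s * f p.2 s * θt (p.1 - p.2)) *
    (2 * Lf θ f g ((p.1 + p.2) / 2) r - Lf θ f g p.1 r - Lf θ f g p.2 r)

theorem Ef_def (θ θt : ℝ → ℝ) (f ft g : ℝ → ℝ → ℝ) (s r : ℝ) :
    (∫ p : ℝ × ℝ, (2 * ft p.1 s * f p.2 s * θ (p.1 - p.2) + f p.1 s * f p.2 s * θt (p.1 - p.2)) *
      (2 * Lf θ f g ((p.1 + p.2) / 2) r - Lf θ f g p.1 r - Lf θ f g p.2 r))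
    = Ef θ θt f ft g s r := rfl

theorem stmt12 (T a C : ℝ) (hT : 0 < T) (hC : 0 < C)
    (θ θt : ℝ → ℝ)
    (hθm : Measurable θ) (hθb : ∃ K, ∀ r, |θ r| ≤ K)
    (hθtm : Measurable θt) (hθtb : ∃ K, ∀ r, |θt r| ≤ K)
    (hθe : ∀ r, θ (-r) = θ r)
    (f ft : ℝ → ℝ → ℝ)
    (hfm : Measurable (Function.uncurry f)) (hftm : Measurable (Function.uncurry ft))
    (hfnn : ∀ x t, 0 ≤ f x t)
    (hfL1 : ∀ t ∈ Set.Icc (0:ℝ) T,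
      Integrable (fun x => f x t) ∧ (∫ x : ℝ, |f x t|) ≤ C)
    (hftL1 : ∀ t ∈ Set.Icc (0:ℝ) T,
      Integrable (fun x => ft x t) ∧ (∫ x : ℝ, |ft x t|) ≤ C)
    (g : ℝ → ℝ → ℝ)
    (hgm : Measurable (Function.uncurry g)) (hgb : ∃ K, ∀ x t, |g x t| ≤ K)
    -- (H1): integrated weak form of the perturbed equation, tested against
    -- bounded measurable φ.
    (H1 : ∀ φ : ℝ → ℝ, Measurable φ → (∃ K, ∀ x, |φ x| ≤ K) →
      ∀ t ∈ Set.Icc (0:ℝ) T,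
        (∫ x : ℝ, ft x t * φ x)
          = ∫ s in (0:ℝ)..t, ∫ p : ℝ × ℝ,
              (2 * ft p.1 s * f p.2 s * θ (p.1 - p.2)
                + f p.1 s * f p.2 s * θt (p.1 - p.2))
                * (2 * φ ((p.1 + p.2) / 2) - φ p.1 - φ p.2))
    -- (H2): integrated form of the adjoint problem with final condition
    -- `g(·,T) = 𝟙_{(-∞,a]}`.
    (H2 : ∀ x : ℝ, ∀ t ∈ Set.Icc (0:ℝ) T,
      g x t = (if x ≤ a then (1:ℝ) else 0)
        + ∫ s in t..T, ∫ y : ℝ,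
            2 * f y s * θ (x - y) * (2 * g ((x + y) / 2) s - g x s - g y s)) :
    (∫ x in Set.Iic a, ft x T)
      = ∫ s in (0:ℝ)..T, ∫ p : ℝ × ℝ,
          θt (p.1 - p.2) * f p.1 s * f p.2 s
            * (2 * g ((p.1 + p.2) / 2) s - g p.1 s - g p.2 s) := by
  obtain ⟨Kθ, hKθ⟩ := hθb
  obtain ⟨Kt, hKt⟩ := hθtb
  obtain ⟨Kg, hKg⟩ := hgb
  have hKθ0 : 0 ≤ Kθ := (abs_nonneg _).trans (hKθ 0)
  have hKt0 : 0 ≤ Kt := (abs_nonneg _).trans (hKt 0)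
  have hKg0 : 0 ≤ Kg := (abs_nonneg _).trans (hKg 0 0)
  -- joint measurability of the integrand of Lf
  have hLim : Measurable (fun z : (ℝ × ℝ) × ℝ =>
      2 * f z.2 z.1.2 * θ (z.1.1 - z.2) *
        (2 * g ((z.1.1 + z.2) / 2) z.1.2 - g z.1.1 z.1.2 - g z.2 z.1.2)) := by
    have m1 : Measurable fun z : (ℝ × ℝ) × ℝ => f z.2 z.1.2 :=
      hfm.comp (measurable_snd.prodMk measurable_fst.snd)
    have m2 : Measurable fun z : (ℝ × ℝ) × ℝ => θ (z.1.1 - z.2) :=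
      hθm.comp (measurable_fst.fst.sub measurable_snd)
    have m3 : Measurable fun z : (ℝ × ℝ) × ℝ => g ((z.1.1 + z.2) / 2) z.1.2 :=
      hgm.comp (((measurable_fst.fst.add measurable_snd).div_const 2).prodMk measurable_fst.snd)
    have m4 : Measurable fun z : (ℝ × ℝ) × ℝ => g z.1.1 z.1.2 :=
      hgm.comp (measurable_fst.fst.prodMk measurable_fst.snd)
    have m5 : Measurable fun z : (ℝ × ℝ) × ℝ => g z.2 z.1.2 :=
      hgm.comp (measurable_snd.prodMk measurable_fst.snd)
    exact ((measurable_const.mul m1).mul m2).mul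
      (((measurable_const.mul m3).sub m4).sub m5)
  have hLm : Measurable fun q : ℝ × ℝ => Lf θ f g q.1 q.2 :=
    hLim.stronglyMeasurable.integral_prod_right'.measurable
  have hLxm : ∀ x, Measurable fun r => Lf θ f g x r :=
    fun x => hLm.comp (measurable_const.prodMk measurable_id)
  have hLrm : ∀ r, Measurable fun x => Lf θ f g x r :=
    fun r => hLm.comp (measurable_id.prodMk measurable_const)
  -- bound on Lf
  have hLb : ∀ r ∈ Icc (0:ℝ) T, ∀ x, |Lf θ f g x r| ≤ 8 * Kθ * Kg * C := by
    intro r hr x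
    have hdom : Integrable (fun y => 8 * Kθ * Kg * f y r) := ((hfL1 r hr).1.const_mul _)
    have hptw : ∀ y, ‖2 * f y r * θ (x - y) * (2 * g ((x + y) / 2) r - g x r - g y r)‖
        ≤ 8 * Kθ * Kg * f y r := by
      intro y
      have hf0 := hfnn y r
      have h2 := hKθ (x - y)
      have h3 : |2 * g ((x + y) / 2) r - g x r - g y r| ≤ 4 * Kg := by
        have a1 := abs_le.mp (hKg ((x + y) / 2) r)
        have a2 := abs_le.mp (hKg x r)
        have a3 := abs_le.mp (hKg y r)
        exact abs_le.mpr ⟨by linarith, by linarith⟩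
      rw [Real.norm_eq_abs, abs_mul, abs_mul,
        abs_of_nonneg (by linarith : (0:ℝ) ≤ 2 * f y r)]
      calc 2 * f y r * |θ (x - y)| * |2 * g ((x + y) / 2) r - g x r - g y r|
          ≤ 2 * f y r * Kθ * (4 * Kg) := by
            apply mul_le_mul _ h3 (abs_nonneg _) (by nlinarith)
            exact mul_le_mul le_rfl h2 (abs_nonneg _) (by linarith)
        _ = 8 * Kθ * (Kg * f y r) := by ring
        _ ≤ 8 * Kθ * Kg * f y r := le_of_eq (by ring)
    have h0 := norm_integral_le_of_norm_le hdom (ae_of_all _ hptw)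
    rw [Lf_def, Real.norm_eq_abs] at h0
    calc |Lf θ f g x r| ≤ ∫ y, 8 * Kθ * Kg * f y r := h0
      _ = 8 * Kθ * Kg * ∫ y, f y r := integral_const_mul _ _
      _ = 8 * Kθ * Kg * ∫ y, |f y r| := by
          congr 1
          exact integral_congr_ae (ae_of_all _ fun y => (abs_of_nonneg (hfnn y r)).symm)
      _ ≤ 8 * Kθ * Kg * C := by
          have := (hfL1 r hr).2
          have h8 : (0:ℝ) ≤ 8 * Kθ * Kg := by positivity
          exact mul_le_mul_of_nonneg_left this h8

  -- basic product integrability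
  have hbase : ∀ (u v : ℝ → ℝ), Integrable u → Integrable v →
      Integrable (fun p : ℝ × ℝ => u p.1 * v p.2) := by
    intro u v hu hv
    have := hu.mul_prod hv
    rwa [← Measure.volume_eq_prod] at this
  -- integrability of (Kc-form) * bounded-measurable
  have hIw : ∀ s ∈ Icc (0:ℝ) T, ∀ w : ℝ × ℝ → ℝ, Measurable w → ∀ Kw : ℝ, (∀ p, |w p| ≤ Kw) →
      Integrable (fun p : ℝ × ℝ =>
        (2 * ft p.1 s * f p.2 s * θ (p.1 - p.2) + f p.1 s * f p.2 s * θt (p.1 - p.2)) * w p) := by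
    intro s hs w hwm Kw hwb
    have hKw0 : 0 ≤ Kw := (abs_nonneg _).trans (hwb (0, 0))
    have h1 : Integrable (fun p : ℝ × ℝ =>
        (2 * θ (p.1 - p.2) * w p) * (ft p.1 s * f p.2 s)) := by
      refine (hbase _ _ (hftL1 s hs).1 (hfL1 s hs).1).bdd_mul (c := 2 * Kθ * Kw)
        (((measurable_const.mul (hθm.comp (measurable_fst.sub measurable_snd))).mul
          hwm).aestronglyMeasurable) (ae_of_all _ fun p => ?_)
      rw [Real.norm_eq_abs, abs_mul, abs_mul, abs_of_nonneg (by norm_num : (0:ℝ) ≤ 2)]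
      calc 2 * |θ (p.1 - p.2)| * |w p| ≤ 2 * Kθ * Kw := by
            apply mul_le_mul _ (hwb p) (abs_nonneg _) (by positivity)
            exact mul_le_mul le_rfl (hKθ _) (abs_nonneg _) (by norm_num)
        _ ≤ 2 * Kθ * Kw := le_rfl
    have h2 : Integrable (fun p : ℝ × ℝ =>
        (θt (p.1 - p.2) * w p) * (f p.1 s * f p.2 s)) := by
      refine (hbase _ _ (hfL1 s hs).1 (hfL1 s hs).1).bdd_mul (c := Kt * Kw)
        (((hθtm.comp (measurable_fst.sub measurable_snd)).mul hwm).aestronglyMeasurable)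
        (ae_of_all _ fun p => ?_)
      rw [Real.norm_eq_abs, abs_mul]
      exact mul_le_mul (hKt _) (hwb p) (abs_nonneg _) hKt0
    have heq : (fun p : ℝ × ℝ =>
        (2 * ft p.1 s * f p.2 s * θ (p.1 - p.2) + f p.1 s * f p.2 s * θt (p.1 - p.2)) * w p)
        = fun p : ℝ × ℝ => (2 * θ (p.1 - p.2) * w p) * (ft p.1 s * f p.2 s)
            + (θt (p.1 - p.2) * w p) * (f p.1 s * f p.2 s) := by
      funext p; ring
    rw [heq]; exact h1.add h2
  -- bound of ∫ (Kc-form) * w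
  have hIb : ∀ s ∈ Icc (0:ℝ) T, ∀ w : ℝ × ℝ → ℝ, ∀ Kw : ℝ, (∀ p, |w p| ≤ Kw) →
      |∫ p : ℝ × ℝ,
        (2 * ft p.1 s * f p.2 s * θ (p.1 - p.2) + f p.1 s * f p.2 s * θt (p.1 - p.2)) * w p|
      ≤ (2 * Kθ + Kt) * C ^ 2 * Kw := by
    intro s hs w Kw hwb
    have hKw0 : 0 ≤ Kw := (abs_nonneg _).trans (hwb (0, 0))
    have hft := hftL1 s hs
    have hf := hfL1 s hs
    have hd1 : Integrable (fun p : ℝ × ℝ => |ft p.1 s| * |f p.2 s|) :=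
      hbase _ _ hft.1.abs hf.1.abs
    have hd2 : Integrable (fun p : ℝ × ℝ => |f p.1 s| * |f p.2 s|) :=
      hbase _ _ hf.1.abs hf.1.abs
    have hdom : Integrable (fun p : ℝ × ℝ =>
        (2 * Kθ * Kw) * (|ft p.1 s| * |f p.2 s|) + (Kt * Kw) * (|f p.1 s| * |f p.2 s|)) :=
      (hd1.const_mul _).add (hd2.const_mul _)
    have hptw : ∀ p : ℝ × ℝ,
        ‖(2 * ft p.1 s * f p.2 s * θ (p.1 - p.2) + f p.1 s * f p.2 s * θt (p.1 - p.2)) * w p‖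
        ≤ (2 * Kθ * Kw) * (|ft p.1 s| * |f p.2 s|) + (Kt * Kw) * (|f p.1 s| * |f p.2 s|) := by
      intro p
      rw [Real.norm_eq_abs, abs_mul]
      have h1 : |2 * ft p.1 s * f p.2 s * θ (p.1 - p.2) + f p.1 s * f p.2 s * θt (p.1 - p.2)|
          ≤ 2 * Kθ * (|ft p.1 s| * |f p.2 s|) + Kt * (|f p.1 s| * |f p.2 s|) := by
        calc |2 * ft p.1 s * f p.2 s * θ (p.1 - p.2) + f p.1 s * f p.2 s * θt (p.1 - p.2)|
            ≤ |2 * ft p.1 s * f p.2 s * θ (p.1 - p.2)| + |f p.1 s * f p.2 s * θt (p.1 - p.2)| :=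
              abs_add_le _ _
          _ = 2 * |ft p.1 s| * |f p.2 s| * |θ (p.1 - p.2)|
              + |f p.1 s| * |f p.2 s| * |θt (p.1 - p.2)| := by
              rw [abs_mul, abs_mul, abs_mul, abs_mul, abs_mul,
                abs_of_nonneg (by norm_num : (0:ℝ) ≤ 2)]
          _ ≤ 2 * Kθ * (|ft p.1 s| * |f p.2 s|) + Kt * (|f p.1 s| * |f p.2 s|) := by
              have e1 : 2 * |ft p.1 s| * |f p.2 s| * |θ (p.1 - p.2)|
                  ≤ 2 * |ft p.1 s| * |f p.2 s| * Kθ :=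
                mul_le_mul_of_nonneg_left (hKθ _) (by positivity)
              have e2 : |f p.1 s| * |f p.2 s| * |θt (p.1 - p.2)|
                  ≤ |f p.1 s| * |f p.2 s| * Kt :=
                mul_le_mul_of_nonneg_left (hKt _) (by positivity)
              nlinarith [e1, e2]
      calc |2 * ft p.1 s * f p.2 s * θ (p.1 - p.2) + f p.1 s * f p.2 s * θt (p.1 - p.2)| * |w p|
          ≤ (2 * Kθ * (|ft p.1 s| * |f p.2 s|) + Kt * (|f p.1 s| * |f p.2 s|)) * Kw :=
            mul_le_mul h1 (hwb p) (abs_nonneg _) (by positivity)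
        _ = (2 * Kθ * Kw) * (|ft p.1 s| * |f p.2 s|) + (Kt * Kw) * (|f p.1 s| * |f p.2 s|) := by
            ring
    have h0 := norm_integral_le_of_norm_le hdom (ae_of_all _ hptw)
    rw [Real.norm_eq_abs] at h0
    have hint1 : (∫ p : ℝ × ℝ, |ft p.1 s| * |f p.2 s|)
        = (∫ x, |ft x s|) * (∫ x, |f x s|) := by
      rw [Measure.volume_eq_prod]
      exact integral_prod_mul (fun x => |ft x s|) (fun x => |f x s|)
    have hint2 : (∫ p : ℝ × ℝ, |f p.1 s| * |f p.2 s|)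
        = (∫ x, |f x s|) * (∫ x, |f x s|) := by
      rw [Measure.volume_eq_prod]
      exact integral_prod_mul (fun x => |f x s|) (fun x => |f x s|)
    have hev : (∫ p : ℝ × ℝ,
        ((2 * Kθ * Kw) * (|ft p.1 s| * |f p.2 s|) + (Kt * Kw) * (|f p.1 s| * |f p.2 s|)))
        = (2 * Kθ * Kw) * ((∫ x, |ft x s|) * (∫ x, |f x s|))
          + (Kt * Kw) * ((∫ x, |f x s|) * (∫ x, |f x s|)) := by
      rw [integral_add (hd1.const_mul _) (hd2.const_mul _), integral_const_mul,
        integral_const_mul, hint1, hint2]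
    rw [hev] at h0
    have i1 : 0 ≤ ∫ x, |ft x s| := integral_nonneg fun x => abs_nonneg _
    have i2 : 0 ≤ ∫ x, |f x s| := integral_nonneg fun x => abs_nonneg _
    have i3 := hft.2
    have i4 := hf.2
    nlinarith [mul_le_mul i3 i4 i2 hC.le, mul_le_mul i4 i4 i2 hC.le,
      mul_nonneg hKθ0 hKw0, mul_nonneg hKt0 hKw0]

  have hfin : ∀ u v : ℝ, IsFiniteMeasure (volume.restrict (Ioc u v)) := by
    intro u v
    constructor
    rw [Measure.restrict_apply_univ, Real.volume_Ioc]
    exact ENNReal.ofReal_lt_top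
  have hLII : ∀ s ∈ Icc (0:ℝ) T, ∀ x, IntervalIntegrable (fun r => Lf θ f g x r) volume s T := by
    intro s hs x
    haveI := hfin s T
    rw [intervalIntegrable_iff, uIoc_of_le hs.2]
    refine Integrable.mono' (integrable_const (8 * Kθ * Kg * C)) ((hLxm x).aestronglyMeasurable) ?_
    filter_upwards [ae_restrict_mem measurableSet_Ioc] with r hr
    rw [Real.norm_eq_abs]
    exact hLb r ⟨le_trans hs.1 hr.1.le, hr.2⟩ x
  have hwDgm : ∀ s : ℝ, Measurable fun p : ℝ × ℝ =>
      2 * g ((p.1 + p.2) / 2) s - g p.1 s - g p.2 s := by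
    intro s
    have m3 : Measurable fun p : ℝ × ℝ => g ((p.1 + p.2) / 2) s :=
      hgm.comp (((measurable_fst.add measurable_snd).div_const 2).prodMk measurable_const)
    have m4 : Measurable fun p : ℝ × ℝ => g p.1 s :=
      hgm.comp (measurable_fst.prodMk measurable_const)
    have m5 : Measurable fun p : ℝ × ℝ => g p.2 s :=
      hgm.comp (measurable_snd.prodMk measurable_const)
    exact ((measurable_const.mul m3).sub m4).sub m5
  have hwDgb : ∀ s : ℝ, ∀ p : ℝ × ℝ,
      |2 * g ((p.1 + p.2) / 2) s - g p.1 s - g p.2 s| ≤ 4 * Kg := by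
    intro s p
    have a1 := abs_le.mp (hKg ((p.1 + p.2) / 2) s)
    have a2 := abs_le.mp (hKg p.1 s)
    have a3 := abs_le.mp (hKg p.2 s)
    exact abs_le.mpr ⟨by linarith, by linarith⟩
  have hwDLm : ∀ r : ℝ, Measurable fun p : ℝ × ℝ =>
      2 * Lf θ f g ((p.1 + p.2) / 2) r - Lf θ f g p.1 r - Lf θ f g p.2 r := by
    intro r
    have m3 : Measurable fun p : ℝ × ℝ => Lf θ f g ((p.1 + p.2) / 2) r :=
      hLm.comp (((measurable_fst.add measurable_snd).div_const 2).prodMk measurable_const)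
    have m4 : Measurable fun p : ℝ × ℝ => Lf θ f g p.1 r :=
      hLm.comp (measurable_fst.prodMk measurable_const)
    have m5 : Measurable fun p : ℝ × ℝ => Lf θ f g p.2 r :=
      hLm.comp (measurable_snd.prodMk measurable_const)
    exact ((measurable_const.mul m3).sub m4).sub m5
  have hwDLb : ∀ r ∈ Icc (0:ℝ) T, ∀ p : ℝ × ℝ,
      |2 * Lf θ f g ((p.1 + p.2) / 2) r - Lf θ f g p.1 r - Lf θ f g p.2 r|
        ≤ 4 * (8 * Kθ * Kg * C) := by
    intro r hr p
    have a1 := abs_le.mp (hLb r hr ((p.1 + p.2) / 2))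
    have a2 := abs_le.mp (hLb r hr p.1)
    have a3 := abs_le.mp (hLb r hr p.2)
    exact abs_le.mpr ⟨by linarith, by linarith⟩
  have hgT : ∀ x, g x T = (if x ≤ a then (1:ℝ) else 0) := by
    intro x
    have h2 := H2 x T ⟨hT.le, le_rfl⟩
    simpa [intervalIntegral.integral_same] using h2
  have hφT : ∀ s ∈ Icc (0:ℝ) T, ∀ x,
      (if x ≤ a then (1:ℝ) else 0) = g x s - ∫ r in s..T, Lf θ f g x r := by
    intro s hs x
    have h2 := H2 x s hs
    simp only [Lf_def] at h2
    linarith [h2]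

  -- the main pointwise-in-time identity
  have hmain : ∀ s ∈ Ioc (0:ℝ) T,
      (∫ p : ℝ × ℝ,
        (2 * ft p.1 s * f p.2 s * θ (p.1 - p.2) + f p.1 s * f p.2 s * θt (p.1 - p.2)) *
          (2 * g ((p.1 + p.2) / 2) T - g p.1 T - g p.2 T))
      = (∫ x, ft x s * Lf θ f g x s)
        + (∫ p : ℝ × ℝ, θt (p.1 - p.2) * f p.1 s * f p.2 s *
            (2 * g ((p.1 + p.2) / 2) s - g p.1 s - g p.2 s))
        - ∫ r in Ioc (0:ℝ) T, (if s < r then Ef θ θt f ft g s r else 0) := by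
    intro s hs
    have hsI : s ∈ Icc (0:ℝ) T := ⟨hs.1.le, hs.2⟩
    haveI := hfin s T
    -- pointwise rewriting of the final-time test function
    have hptw : ∀ p : ℝ × ℝ,
        (2 * ft p.1 s * f p.2 s * θ (p.1 - p.2) + f p.1 s * f p.2 s * θt (p.1 - p.2)) *
          (2 * g ((p.1 + p.2) / 2) T - g p.1 T - g p.2 T)
        = (2 * ft p.1 s * f p.2 s * θ (p.1 - p.2) + f p.1 s * f p.2 s * θt (p.1 - p.2)) *
            (2 * g ((p.1 + p.2) / 2) s - g p.1 s - g p.2 s)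
          - (2 * ft p.1 s * f p.2 s * θ (p.1 - p.2) + f p.1 s * f p.2 s * θt (p.1 - p.2)) *
            ∫ r in Ioc s T,
              (2 * Lf θ f g ((p.1 + p.2) / 2) r - Lf θ f g p.1 r - Lf θ f g p.2 r) := by
      intro p
      have e1 := hφT s hsI ((p.1 + p.2) / 2)
      have e2 := hφT s hsI p.1
      have e3 := hφT s hsI p.2
      have i1 := hLII s hsI ((p.1 + p.2) / 2)
      have i2 := hLII s hsI p.1
      have i3 := hLII s hsI p.2
      rw [hgT ((p.1 + p.2) / 2), hgT p.1, hgT p.2, e1, e2, e3,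
        ← intervalIntegral.integral_of_le hsI.2,
        intervalIntegral.integral_sub ((i1.const_mul 2).sub i2) i3,
        intervalIntegral.integral_sub (i1.const_mul 2) i2,
        intervalIntegral.integral_const_mul]
      ring
    -- integrability of the two pieces
    have hInt1 : Integrable (fun p : ℝ × ℝ =>
        (2 * ft p.1 s * f p.2 s * θ (p.1 - p.2) + f p.1 s * f p.2 s * θt (p.1 - p.2)) *
          (2 * g ((p.1 + p.2) / 2) s - g p.1 s - g p.2 s)) :=
      hIw s hsI _ (hwDgm s) (4 * Kg) (hwDgb s)
    have hWm2 : Measurable (fun p : ℝ × ℝ => ∫ r in Ioc s T,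
        (2 * Lf θ f g ((p.1 + p.2) / 2) r - Lf θ f g p.1 r - Lf θ f g p.2 r)) := by
      have m3 : Measurable fun z : (ℝ × ℝ) × ℝ => Lf θ f g ((z.1.1 + z.1.2) / 2) z.2 :=
        hLm.comp (((measurable_fst.fst.add measurable_fst.snd).div_const 2).prodMk
          measurable_snd)
      have m4 : Measurable fun z : (ℝ × ℝ) × ℝ => Lf θ f g z.1.1 z.2 :=
        hLm.comp (measurable_fst.fst.prodMk measurable_snd)
      have m5 : Measurable fun z : (ℝ × ℝ) × ℝ => Lf θ f g z.1.2 z.2 :=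
        hLm.comp (measurable_fst.snd.prodMk measurable_snd)
      exact (((measurable_const.mul m3).sub m4).sub
        m5).stronglyMeasurable.integral_prod_right'.measurable
    have hWb2 : ∀ p : ℝ × ℝ, |∫ r in Ioc s T,
        (2 * Lf θ f g ((p.1 + p.2) / 2) r - Lf θ f g p.1 r - Lf θ f g p.2 r)|
        ≤ 4 * (8 * Kθ * Kg * C) * T := by
      intro p
      rw [← intervalIntegral.integral_of_le hsI.2, ← Real.norm_eq_abs]
      have h0 := intervalIntegral.norm_integral_le_of_norm_le_const (a := s) (b := T)
        (C := 4 * (8 * Kθ * Kg * C)) (f := fun r =>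
          2 * Lf θ f g ((p.1 + p.2) / 2) r - Lf θ f g p.1 r - Lf θ f g p.2 r) ?_
      · refine h0.trans ?_
        have : |T - s| = T - s := abs_of_nonneg (by linarith [hsI.2])
        rw [this]
        have h4 : (0:ℝ) ≤ 4 * (8 * Kθ * Kg * C) := by positivity
        nlinarith [hsI.1]
      · intro r hr
        rw [uIoc_of_le hsI.2] at hr
        rw [Real.norm_eq_abs]
        exact hwDLb r ⟨le_trans hsI.1 hr.1.le, hr.2⟩ p
    have hInt2 : Integrable (fun p : ℝ × ℝ =>
        (2 * ft p.1 s * f p.2 s * θ (p.1 - p.2) + f p.1 s * f p.2 s * θt (p.1 - p.2)) *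
          ∫ r in Ioc s T,
            (2 * Lf θ f g ((p.1 + p.2) / 2) r - Lf θ f g p.1 r - Lf θ f g p.2 r)) :=
      hIw s hsI _ hWm2 _ hWb2
    rw [integral_congr_ae (ae_of_all _ hptw), integral_sub hInt1 hInt2]
    -- Part 1 : first piece equals A s + B s
    have hpart1 : (∫ p : ℝ × ℝ,
        (2 * ft p.1 s * f p.2 s * θ (p.1 - p.2) + f p.1 s * f p.2 s * θt (p.1 - p.2)) *
          (2 * g ((p.1 + p.2) / 2) s - g p.1 s - g p.2 s))
        = (∫ x, ft x s * Lf θ f g x s)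
          + ∫ p : ℝ × ℝ, θt (p.1 - p.2) * f p.1 s * f p.2 s *
              (2 * g ((p.1 + p.2) / 2) s - g p.1 s - g p.2 s) := by
      have hP1 : Integrable (fun p : ℝ × ℝ =>
          (2 * θ (p.1 - p.2) * (2 * g ((p.1 + p.2) / 2) s - g p.1 s - g p.2 s)) *
            (ft p.1 s * f p.2 s)) := by
        refine (hbase _ _ (hftL1 s hsI).1 (hfL1 s hsI).1).bdd_mul (c := 2 * Kθ * (4 * Kg))
          (((measurable_const.mul (hθm.comp (measurable_fst.sub measurable_snd))).mul
            (hwDgm s)).aestronglyMeasurable) (ae_of_all _ fun p => ?_)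
        rw [Real.norm_eq_abs, abs_mul, abs_mul, abs_of_nonneg (by norm_num : (0:ℝ) ≤ 2)]
        refine mul_le_mul (mul_le_mul le_rfl (hKθ _) (abs_nonneg _) (by norm_num))
          (hwDgb s p) (abs_nonneg _) (by positivity)
      have hP2 : Integrable (fun p : ℝ × ℝ =>
          (θt (p.1 - p.2) * (2 * g ((p.1 + p.2) / 2) s - g p.1 s - g p.2 s)) *
            (f p.1 s * f p.2 s)) := by
        refine (hbase _ _ (hfL1 s hsI).1 (hfL1 s hsI).1).bdd_mul (c := Kt * (4 * Kg))
          (((hθtm.comp (measurable_fst.sub measurable_snd)).mul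
            (hwDgm s)).aestronglyMeasurable) (ae_of_all _ fun p => ?_)
        rw [Real.norm_eq_abs, abs_mul]
        exact mul_le_mul (hKt _) (hwDgb s p) (abs_nonneg _) hKt0
      have hsplit : (fun p : ℝ × ℝ =>
          (2 * ft p.1 s * f p.2 s * θ (p.1 - p.2) + f p.1 s * f p.2 s * θt (p.1 - p.2)) *
            (2 * g ((p.1 + p.2) / 2) s - g p.1 s - g p.2 s))
          = fun p : ℝ × ℝ =>
            ((2 * θ (p.1 - p.2) * (2 * g ((p.1 + p.2) / 2) s - g p.1 s - g p.2 s)) *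
              (ft p.1 s * f p.2 s))
            + ((θt (p.1 - p.2) * (2 * g ((p.1 + p.2) / 2) s - g p.1 s - g p.2 s)) *
              (f p.1 s * f p.2 s)) := by
        funext p; ring
      rw [hsplit, integral_add hP1 hP2]
      congr 1
      · -- Fubini: equals ∫ x, ft x s * Lf x s
        have hP1' : Integrable (Function.uncurry fun x y =>
            ft x s * (2 * f y s * θ (x - y) * (2 * g ((x + y) / 2) s - g x s - g y s)))
            ((volume : Measure ℝ).prod volume) := by
          rw [← Measure.volume_eq_prod]
          have e : (Function.uncurry fun x y =>
              ft x s * (2 * f y s * θ (x - y) * (2 * g ((x + y) / 2) s - g x s - g y s)))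
              = fun p : ℝ × ℝ =>
                (2 * θ (p.1 - p.2) * (2 * g ((p.1 + p.2) / 2) s - g p.1 s - g p.2 s)) *
                  (ft p.1 s * f p.2 s) := by
            funext p; simp only [Function.uncurry]; ring
          rw [e]; exact hP1
        have hswap := MeasureTheory.integral_integral hP1'
        calc ∫ p : ℝ × ℝ,
              (2 * θ (p.1 - p.2) * (2 * g ((p.1 + p.2) / 2) s - g p.1 s - g p.2 s)) *
                (ft p.1 s * f p.2 s)
            = ∫ z : ℝ × ℝ,
                ft z.1 s * (2 * f z.2 s * θ (z.1 - z.2) *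
                  (2 * g ((z.1 + z.2) / 2) s - g z.1 s - g z.2 s))
                ∂((volume : Measure ℝ).prod volume) := by
              refine integral_congr_ae (ae_of_all _ fun p => ?_)
              ring
          _ = ∫ x, ∫ y, ft x s * (2 * f y s * θ (x - y) *
                (2 * g ((x + y) / 2) s - g x s - g y s)) := hswap.symm
          _ = ∫ x, ft x s * Lf θ f g x s := by
              refine integral_congr_ae (ae_of_all _ fun x => ?_)
              show (∫ y, ft x s * (2 * f y s * θ (x - y) *
                (2 * g ((x + y) / 2) s - g x s - g y s))) = ft x s * Lf θ f g x s
              rw [integral_const_mul, Lf_def]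
      · refine integral_congr_ae (ae_of_all _ fun p => ?_)
        ring
    have hpart2 : (∫ p : ℝ × ℝ,
        (2 * ft p.1 s * f p.2 s * θ (p.1 - p.2) + f p.1 s * f p.2 s * θt (p.1 - p.2)) *
          ∫ r in Ioc s T,
            (2 * Lf θ f g ((p.1 + p.2) / 2) r - Lf θ f g p.1 r - Lf θ f g p.2 r))
        = ∫ r in Ioc (0:ℝ) T, (if s < r then Ef θ θt f ft g s r else 0) := by
      have e0 : ∀ p : ℝ × ℝ,
          (2 * ft p.1 s * f p.2 s * θ (p.1 - p.2) + f p.1 s * f p.2 s * θt (p.1 - p.2)) *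
            (∫ r in Ioc s T,
              (2 * Lf θ f g ((p.1 + p.2) / 2) r - Lf θ f g p.1 r - Lf θ f g p.2 r))
          = ∫ r in Ioc s T,
              (2 * ft p.1 s * f p.2 s * θ (p.1 - p.2) + f p.1 s * f p.2 s * θt (p.1 - p.2)) *
                (2 * Lf θ f g ((p.1 + p.2) / 2) r - Lf θ f g p.1 r - Lf θ f g p.2 r) :=
        fun p => (integral_const_mul _ _).symm
      rw [integral_congr_ae (ae_of_all _ e0)]
      have hb1 : Integrable (fun z : (ℝ × ℝ) × ℝ => (ft z.1.1 s * f z.1.2 s) * (1:ℝ))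
          ((volume : Measure (ℝ × ℝ)).prod (volume.restrict (Ioc s T))) :=
        (hbase _ _ (hftL1 s hsI).1 (hfL1 s hsI).1).mul_prod (integrable_const 1)
      have hb2 : Integrable (fun z : (ℝ × ℝ) × ℝ => (f z.1.1 s * f z.1.2 s) * (1:ℝ))
          ((volume : Measure (ℝ × ℝ)).prod (volume.restrict (Ioc s T))) :=
        (hbase _ _ (hfL1 s hsI).1 (hfL1 s hsI).1).mul_prod (integrable_const 1)
      have hae : ∀ᵐ z : (ℝ × ℝ) × ℝ
          ∂((volume : Measure (ℝ × ℝ)).prod (volume.restrict (Ioc s T))), z.2 ∈ Ioc s T := by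
        rw [ae_iff]
        have hset : {z : (ℝ × ℝ) × ℝ | ¬ z.2 ∈ Ioc s T}
            = (univ : Set (ℝ × ℝ)) ×ˢ ((Ioc s T)ᶜ) := by
          ext z; simp
        rw [hset, Measure.prod_prod, Measure.restrict_apply measurableSet_Ioc.compl,
          compl_inter_self]
        simp
      have m3 : Measurable fun z : (ℝ × ℝ) × ℝ => Lf θ f g ((z.1.1 + z.1.2) / 2) z.2 :=
        hLm.comp (((measurable_fst.fst.add measurable_fst.snd).div_const 2).prodMk
          measurable_snd)
      have m4 : Measurable fun z : (ℝ × ℝ) × ℝ => Lf θ f g z.1.1 z.2 :=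
        hLm.comp (measurable_fst.fst.prodMk measurable_snd)
      have m5 : Measurable fun z : (ℝ × ℝ) × ℝ => Lf θ f g z.1.2 z.2 :=
        hLm.comp (measurable_fst.snd.prodMk measurable_snd)
      have mDL : Measurable fun z : (ℝ × ℝ) × ℝ =>
          2 * Lf θ f g ((z.1.1 + z.1.2) / 2) z.2 - Lf θ f g z.1.1 z.2 - Lf θ f g z.1.2 z.2 :=
        ((measurable_const.mul m3).sub m4).sub m5
      have hw1 : Integrable (fun z : (ℝ × ℝ) × ℝ =>
          (2 * θ (z.1.1 - z.1.2) *
            (2 * Lf θ f g ((z.1.1 + z.1.2) / 2) z.2 - Lf θ f g z.1.1 z.2 - Lf θ f g z.1.2 z.2)) *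
            ((ft z.1.1 s * f z.1.2 s) * 1))
          ((volume : Measure (ℝ × ℝ)).prod (volume.restrict (Ioc s T))) := by
        refine hb1.bdd_mul (c := 2 * Kθ * (4 * (8 * Kθ * Kg * C)))
          (((measurable_const.mul (hθm.comp (measurable_fst.fst.sub measurable_fst.snd))).mul
            mDL).aestronglyMeasurable) ?_
        filter_upwards [hae] with z hz
        rw [Real.norm_eq_abs, abs_mul, abs_mul, abs_of_nonneg (by norm_num : (0:ℝ) ≤ 2)]
        refine mul_le_mul (mul_le_mul le_rfl (hKθ _) (abs_nonneg _) (by norm_num))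
          (hwDLb z.2 ⟨le_trans hsI.1 hz.1.le, hz.2⟩ z.1) (abs_nonneg _) (by positivity)
      have hw2 : Integrable (fun z : (ℝ × ℝ) × ℝ =>
          (θt (z.1.1 - z.1.2) *
            (2 * Lf θ f g ((z.1.1 + z.1.2) / 2) z.2 - Lf θ f g z.1.1 z.2 - Lf θ f g z.1.2 z.2)) *
            ((f z.1.1 s * f z.1.2 s) * 1))
          ((volume : Measure (ℝ × ℝ)).prod (volume.restrict (Ioc s T))) := by
        refine hb2.bdd_mul (c := Kt * (4 * (8 * Kθ * Kg * C)))
          (((hθtm.comp (measurable_fst.fst.sub measurable_fst.snd)).mul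
            mDL).aestronglyMeasurable) ?_
        filter_upwards [hae] with z hz
        rw [Real.norm_eq_abs, abs_mul]
        exact mul_le_mul (hKt _) (hwDLb z.2 ⟨le_trans hsI.1 hz.1.le, hz.2⟩ z.1)
          (abs_nonneg _) hKt0
      have hfi : Integrable (Function.uncurry fun (p : ℝ × ℝ) (r : ℝ) =>
          (2 * ft p.1 s * f p.2 s * θ (p.1 - p.2) + f p.1 s * f p.2 s * θt (p.1 - p.2)) *
            (2 * Lf θ f g ((p.1 + p.2) / 2) r - Lf θ f g p.1 r - Lf θ f g p.2 r))
          ((volume : Measure (ℝ × ℝ)).prod (volume.restrict (Ioc s T))) := by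
        have e : (Function.uncurry fun (p : ℝ × ℝ) (r : ℝ) =>
            (2 * ft p.1 s * f p.2 s * θ (p.1 - p.2) + f p.1 s * f p.2 s * θt (p.1 - p.2)) *
              (2 * Lf θ f g ((p.1 + p.2) / 2) r - Lf θ f g p.1 r - Lf θ f g p.2 r))
            = fun z : (ℝ × ℝ) × ℝ =>
              (2 * θ (z.1.1 - z.1.2) *
                (2 * Lf θ f g ((z.1.1 + z.1.2) / 2) z.2 - Lf θ f g z.1.1 z.2
                  - Lf θ f g z.1.2 z.2)) * ((ft z.1.1 s * f z.1.2 s) * 1)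
              + (θt (z.1.1 - z.1.2) *
                (2 * Lf θ f g ((z.1.1 + z.1.2) / 2) z.2 - Lf θ f g z.1.1 z.2
                  - Lf θ f g z.1.2 z.2)) * ((f z.1.1 s * f z.1.2 s) * 1) := by
          funext z; simp only [Function.uncurry]; ring
        rw [e]; exact hw1.add hw2
      have hswap := MeasureTheory.integral_integral_swap hfi
      calc (∫ p : ℝ × ℝ, ∫ r in Ioc s T,
            (2 * ft p.1 s * f p.2 s * θ (p.1 - p.2) + f p.1 s * f p.2 s * θt (p.1 - p.2)) *
              (2 * Lf θ f g ((p.1 + p.2) / 2) r - Lf θ f g p.1 r - Lf θ f g p.2 r))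
          = ∫ r in Ioc s T, ∫ p : ℝ × ℝ,
              (2 * ft p.1 s * f p.2 s * θ (p.1 - p.2) + f p.1 s * f p.2 s * θt (p.1 - p.2)) *
                (2 * Lf θ f g ((p.1 + p.2) / 2) r - Lf θ f g p.1 r - Lf θ f g p.2 r) := hswap
        _ = ∫ r in Ioc s T, Ef θ θt f ft g s r := rfl
        _ = ∫ r in Ioc (0:ℝ) T, (if s < r then Ef θ θt f ft g s r else 0) := by
            have hind : (fun r => if s < r then Ef θ θt f ft g s r else 0)
                = (Ioi s).indicator (fun r => Ef θ θt f ft g s r) := by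
              funext r; simp [Set.indicator_apply, mem_Ioi]
            rw [hind, setIntegral_indicator measurableSet_Ioi]
            have hIocInt : Ioc (0:ℝ) T ∩ Ioi s = Ioc s T := by
              ext r
              simp only [mem_inter_iff, mem_Ioc, mem_Ioi]
              constructor
              · rintro ⟨⟨_, h2⟩, h3⟩; exact ⟨h3, h2⟩
              · rintro ⟨h1, h2⟩; exact ⟨⟨lt_trans hs.1 h1, h2⟩, h1⟩
            rw [hIocInt]
    rw [hpart1, hpart2]

  haveI := hfin (0:ℝ) T
  -- measurability and bounds for A, B, W
  have hAm : Measurable fun s : ℝ => ∫ x, ft x s * Lf θ f g x s := by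
    have : Measurable fun q : ℝ × ℝ => ft q.2 q.1 * Lf θ f g q.2 q.1 :=
      (hftm.comp (measurable_snd.prodMk measurable_fst)).mul
        (hLm.comp (measurable_snd.prodMk measurable_fst))
    exact this.stronglyMeasurable.integral_prod_right'.measurable
  have hAb : ∀ s ∈ Icc (0:ℝ) T, |∫ x, ft x s * Lf θ f g x s| ≤ 8 * Kθ * Kg * C * C := by
    intro s hs
    have hdom : Integrable (fun x => 8 * Kθ * Kg * C * |ft x s|) :=
      (hftL1 s hs).1.abs.const_mul _
    have hptw : ∀ x, ‖ft x s * Lf θ f g x s‖ ≤ 8 * Kθ * Kg * C * |ft x s| := by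
      intro x
      rw [Real.norm_eq_abs, abs_mul]
      have := hLb s hs x
      have h1 : |ft x s| * |Lf θ f g x s| ≤ |ft x s| * (8 * Kθ * Kg * C) :=
        mul_le_mul_of_nonneg_left this (abs_nonneg _)
      linarith [h1]
    have h0 := norm_integral_le_of_norm_le hdom (ae_of_all _ hptw)
    rw [Real.norm_eq_abs] at h0
    refine h0.trans ?_
    rw [integral_const_mul]
    have h8 : (0:ℝ) ≤ 8 * Kθ * Kg * C := by positivity
    exact mul_le_mul_of_nonneg_left (hftL1 s hs).2 h8
  have hAint : IntegrableOn (fun s => ∫ x, ft x s * Lf θ f g x s) (Ioc (0:ℝ) T) := by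
    refine Integrable.mono' (integrable_const (8 * Kθ * Kg * C * C))
      hAm.aestronglyMeasurable ?_
    filter_upwards [ae_restrict_mem measurableSet_Ioc] with s hs
    rw [Real.norm_eq_abs]
    exact hAb s ⟨hs.1.le, hs.2⟩
  have hBm : Measurable fun s : ℝ => ∫ p : ℝ × ℝ, θt (p.1 - p.2) * f p.1 s * f p.2 s *
      (2 * g ((p.1 + p.2) / 2) s - g p.1 s - g p.2 s) := by
    have m1 : Measurable fun z : ℝ × (ℝ × ℝ) => θt (z.2.1 - z.2.2) :=
      hθtm.comp (measurable_snd.fst.sub measurable_snd.snd)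
    have m2 : Measurable fun z : ℝ × (ℝ × ℝ) => f z.2.1 z.1 :=
      hfm.comp (measurable_snd.fst.prodMk measurable_fst)
    have m2' : Measurable fun z : ℝ × (ℝ × ℝ) => f z.2.2 z.1 :=
      hfm.comp (measurable_snd.snd.prodMk measurable_fst)
    have m3 : Measurable fun z : ℝ × (ℝ × ℝ) => g ((z.2.1 + z.2.2) / 2) z.1 :=
      hgm.comp (((measurable_snd.fst.add measurable_snd.snd).div_const 2).prodMk
        measurable_fst)
    have m4 : Measurable fun z : ℝ × (ℝ × ℝ) => g z.2.1 z.1 :=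
      hgm.comp (measurable_snd.fst.prodMk measurable_fst)
    have m5 : Measurable fun z : ℝ × (ℝ × ℝ) => g z.2.2 z.1 :=
      hgm.comp (measurable_snd.snd.prodMk measurable_fst)
    exact (((m1.mul m2).mul m2').mul
      (((measurable_const.mul m3).sub m4).sub m5)).stronglyMeasurable.integral_prod_right'.measurable
  have hBb : ∀ s ∈ Icc (0:ℝ) T, |∫ p : ℝ × ℝ, θt (p.1 - p.2) * f p.1 s * f p.2 s *
      (2 * g ((p.1 + p.2) / 2) s - g p.1 s - g p.2 s)| ≤ Kt * (4 * Kg) * (C * C) := by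
    intro s hs
    have hd2 : Integrable (fun p : ℝ × ℝ => |f p.1 s| * |f p.2 s|) :=
      hbase _ _ (hfL1 s hs).1.abs (hfL1 s hs).1.abs
    have hptw : ∀ p : ℝ × ℝ, ‖θt (p.1 - p.2) * f p.1 s * f p.2 s *
        (2 * g ((p.1 + p.2) / 2) s - g p.1 s - g p.2 s)‖
        ≤ Kt * (4 * Kg) * (|f p.1 s| * |f p.2 s|) := by
      intro p
      rw [Real.norm_eq_abs, abs_mul, abs_mul, abs_mul]
      have hD := hwDgb s p
      calc |θt (p.1 - p.2)| * |f p.1 s| * |f p.2 s| *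
            |2 * g ((p.1 + p.2) / 2) s - g p.1 s - g p.2 s|
          ≤ Kt * |f p.1 s| * |f p.2 s| * (4 * Kg) := by
            refine mul_le_mul ?_ hD (abs_nonneg _) (by positivity)
            refine mul_le_mul_of_nonneg_right
              (mul_le_mul_of_nonneg_right (hKt _) (abs_nonneg _)) (abs_nonneg _)
        _ = Kt * (4 * Kg) * (|f p.1 s| * |f p.2 s|) := by ring
    have h0 := norm_integral_le_of_norm_le (hd2.const_mul (Kt * (4 * Kg)))
      (ae_of_all _ hptw)
    rw [Real.norm_eq_abs] at h0
    refine h0.trans ?_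
    rw [integral_const_mul]
    have hint2 : (∫ p : ℝ × ℝ, |f p.1 s| * |f p.2 s|)
        = (∫ x, |f x s|) * (∫ x, |f x s|) := by
      rw [Measure.volume_eq_prod]
      exact integral_prod_mul (fun x => |f x s|) (fun x => |f x s|)
    rw [hint2]
    have i2 : 0 ≤ ∫ x, |f x s| := integral_nonneg fun x => abs_nonneg _
    have i4 := (hfL1 s hs).2
    have h44 : (0:ℝ) ≤ Kt * (4 * Kg) := by positivity
    exact mul_le_mul_of_nonneg_left (mul_le_mul i4 i4 i2 hC.le) h44
  have hBint : IntegrableOn (fun s => ∫ p : ℝ × ℝ, θt (p.1 - p.2) * f p.1 s * f p.2 s *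
      (2 * g ((p.1 + p.2) / 2) s - g p.1 s - g p.2 s)) (Ioc (0:ℝ) T) := by
    refine Integrable.mono' (integrable_const (Kt * (4 * Kg) * (C * C)))
      hBm.aestronglyMeasurable ?_
    filter_upwards [ae_restrict_mem measurableSet_Ioc] with s hs
    rw [Real.norm_eq_abs]
    exact hBb s ⟨hs.1.le, hs.2⟩
  -- measurability of Ef
  have hEm : Measurable fun q : ℝ × ℝ => Ef θ θt f ft g q.1 q.2 := by
    have mft : Measurable fun z : (ℝ × ℝ) × (ℝ × ℝ) => ft z.2.1 z.1.1 :=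
      hftm.comp (measurable_snd.fst.prodMk measurable_fst.fst)
    have mf1 : Measurable fun z : (ℝ × ℝ) × (ℝ × ℝ) => f z.2.1 z.1.1 :=
      hfm.comp (measurable_snd.fst.prodMk measurable_fst.fst)
    have mf2 : Measurable fun z : (ℝ × ℝ) × (ℝ × ℝ) => f z.2.2 z.1.1 :=
      hfm.comp (measurable_snd.snd.prodMk measurable_fst.fst)
    have mθ : Measurable fun z : (ℝ × ℝ) × (ℝ × ℝ) => θ (z.2.1 - z.2.2) :=
      hθm.comp (measurable_snd.fst.sub measurable_snd.snd)
    have mθt : Measurable fun z : (ℝ × ℝ) × (ℝ × ℝ) => θt (z.2.1 - z.2.2) :=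
      hθtm.comp (measurable_snd.fst.sub measurable_snd.snd)
    have mL3 : Measurable fun z : (ℝ × ℝ) × (ℝ × ℝ) => Lf θ f g ((z.2.1 + z.2.2) / 2) z.1.2 :=
      hLm.comp (((measurable_snd.fst.add measurable_snd.snd).div_const 2).prodMk
        measurable_fst.snd)
    have mL4 : Measurable fun z : (ℝ × ℝ) × (ℝ × ℝ) => Lf θ f g z.2.1 z.1.2 :=
      hLm.comp (measurable_snd.fst.prodMk measurable_fst.snd)
    have mL5 : Measurable fun z : (ℝ × ℝ) × (ℝ × ℝ) => Lf θ f g z.2.2 z.1.2 :=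
      hLm.comp (measurable_snd.snd.prodMk measurable_fst.snd)
    exact (((((measurable_const.mul mft).mul mf2).mul mθ).add
      ((mf1.mul mf2).mul mθt)).mul
      (((measurable_const.mul mL3).sub mL4).sub mL5)).stronglyMeasurable.integral_prod_right'.measurable
  have hitem : Measurable fun q : ℝ × ℝ => if q.1 < q.2 then Ef θ θt f ft g q.1 q.2 else 0 :=
    Measurable.ite (measurableSet_lt measurable_fst measurable_snd) hEm measurable_const
  have hWm : Measurable fun s : ℝ =>
      ∫ r in Ioc (0:ℝ) T, (if s < r then Ef θ θt f ft g s r else 0) :=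
    hitem.stronglyMeasurable.integral_prod_right'.measurable
  have hEb : ∀ s ∈ Icc (0:ℝ) T, ∀ r ∈ Icc (0:ℝ) T,
      |Ef θ θt f ft g s r| ≤ (2 * Kθ + Kt) * C ^ 2 * (4 * (8 * Kθ * Kg * C)) := by
    intro s hs r hr
    exact hIb s hs _ _ (hwDLb r hr)
  have hWb : ∀ s ∈ Icc (0:ℝ) T,
      |∫ r in Ioc (0:ℝ) T, (if s < r then Ef θ θt f ft g s r else 0)|
        ≤ (2 * Kθ + Kt) * C ^ 2 * (4 * (8 * Kθ * Kg * C)) * T := by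
    intro s hs
    rw [← intervalIntegral.integral_of_le hT.le, ← Real.norm_eq_abs]
    have h0 := intervalIntegral.norm_integral_le_of_norm_le_const (a := (0:ℝ)) (b := T)
      (C := (2 * Kθ + Kt) * C ^ 2 * (4 * (8 * Kθ * Kg * C)))
      (f := fun r => if s < r then Ef θ θt f ft g s r else 0) ?_
    · refine h0.trans ?_
      rw [abs_of_nonneg (by linarith : (0:ℝ) ≤ T - 0)]
      have h4 : (0:ℝ) ≤ (2 * Kθ + Kt) * C ^ 2 * (4 * (8 * Kθ * Kg * C)) := by positivity
      nlinarith
    · intro r hr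
      rw [uIoc_of_le hT.le] at hr
      rw [Real.norm_eq_abs]
      by_cases hsr : s < r
      · simp only [if_pos hsr]
        exact hEb s hs r ⟨hr.1.le, hr.2⟩
      · simp only [if_neg hsr, abs_zero]
        positivity
  have hWint : IntegrableOn (fun s =>
      ∫ r in Ioc (0:ℝ) T, (if s < r then Ef θ θt f ft g s r else 0)) (Ioc (0:ℝ) T) := by
    refine Integrable.mono'
      (integrable_const ((2 * Kθ + Kt) * C ^ 2 * (4 * (8 * Kθ * Kg * C)) * T))
      hWm.aestronglyMeasurable ?_
    filter_upwards [ae_restrict_mem measurableSet_Ioc] with s hs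
    rw [Real.norm_eq_abs]
    exact hWb s ⟨hs.1.le, hs.2⟩
  -- Fubini in time: ∫ W = ∫ A on (0, T]
  have hW_eq_A : (∫ s in Ioc (0:ℝ) T,
        ∫ r in Ioc (0:ℝ) T, (if s < r then Ef θ θt f ft g s r else 0))
      = ∫ s in Ioc (0:ℝ) T, ∫ x, ft x s * Lf θ f g x s := by
    have hfi : Integrable (Function.uncurry fun s r : ℝ =>
        if s < r then Ef θ θt f ft g s r else 0)
        ((volume.restrict (Ioc (0:ℝ) T)).prod (volume.restrict (Ioc (0:ℝ) T))) := by
      haveI := hfin (0:ℝ) T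
      refine Integrable.mono'
        (integrable_const ((2 * Kθ + Kt) * C ^ 2 * (4 * (8 * Kθ * Kg * C))))
        hitem.aestronglyMeasurable ?_
      rw [Measure.prod_restrict]
      filter_upwards [ae_restrict_mem (measurableSet_Ioc.prod measurableSet_Ioc)] with z hz
      rw [Real.norm_eq_abs]
      have hz1 : z.1 ∈ Icc (0:ℝ) T := ⟨hz.1.1.le, hz.1.2⟩
      have hz2 : z.2 ∈ Icc (0:ℝ) T := ⟨hz.2.1.le, hz.2.2⟩
      show |if z.1 < z.2 then Ef θ θt f ft g z.1 z.2 else 0| ≤ _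
      by_cases hsr : z.1 < z.2
      · simp only [if_pos hsr]
        exact hEb z.1 hz1 z.2 hz2
      · simp only [if_neg hsr, abs_zero]
        positivity
    have hswapT := MeasureTheory.integral_integral_swap hfi
    refine hswapT.trans ?_
    refine setIntegral_congr_fun measurableSet_Ioc fun r hr => ?_
    -- inner : ∫ s in Ioc 0 T, ite = A r
    have hind : (fun s => if s < r then Ef θ θt f ft g s r else 0)
        = (Iio r).indicator (fun s => Ef θ θt f ft g s r) := by
      funext u; simp [Set.indicator_apply, mem_Iio]
    show (∫ s in Ioc (0:ℝ) T, (if s < r then Ef θ θt f ft g s r else 0))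
      = ∫ x, ft x r * Lf θ f g x r
    rw [hind, setIntegral_indicator measurableSet_Iio]
    have hIocInt : Ioc (0:ℝ) T ∩ Iio r = Ioo 0 r := by
      ext u
      simp only [mem_inter_iff, mem_Ioc, mem_Ioo, mem_Iio]
      constructor
      · rintro ⟨⟨h1, _⟩, h3⟩; exact ⟨h1, h3⟩
      · rintro ⟨h1, h2⟩; exact ⟨⟨h1, le_trans h2.le hr.2⟩, h2⟩
    rw [hIocInt, ← MeasureTheory.integral_Ioc_eq_integral_Ioo,
      ← intervalIntegral.integral_of_le hr.1.le]
    have hH1r := H1 (fun x => Lf θ f g x r) (hLrm r)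
      ⟨8 * Kθ * Kg * C, fun x => hLb r ⟨hr.1.le, hr.2⟩ x⟩ r ⟨hr.1.le, hr.2⟩
    exact hH1r.symm
  -- final-time identification and the weak formulation at time T
  have step1 : (∫ x in Iic a, ft x T) = ∫ x, ft x T * g x T := by
    rw [← integral_indicator measurableSet_Iic]
    refine integral_congr_ae (ae_of_all _ fun x => ?_)
    show (Iic a).indicator (fun x => ft x T) x = ft x T * g x T
    rw [hgT x]
    by_cases hx : x ≤ a
    · simp [Set.indicator_apply, hx]
    · simp [Set.indicator_apply, hx]
  have step2 := H1 (fun x => g x T) (hgm.comp (measurable_id.prodMk measurable_const))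
    ⟨Kg, fun x => hKg x T⟩ T ⟨hT.le, le_rfl⟩
  calc (∫ x in Iic a, ft x T)
      = ∫ x, ft x T * g x T := step1
    _ = ∫ s in (0:ℝ)..T, ∫ p : ℝ × ℝ,
          (2 * ft p.1 s * f p.2 s * θ (p.1 - p.2) + f p.1 s * f p.2 s * θt (p.1 - p.2)) *
            (2 * g ((p.1 + p.2) / 2) T - g p.1 T - g p.2 T) := step2
    _ = ∫ s in Ioc (0:ℝ) T, ∫ p : ℝ × ℝ,
          (2 * ft p.1 s * f p.2 s * θ (p.1 - p.2) + f p.1 s * f p.2 s * θt (p.1 - p.2)) *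
            (2 * g ((p.1 + p.2) / 2) T - g p.1 T - g p.2 T) :=
        intervalIntegral.integral_of_le hT.le
    _ = ∫ s in Ioc (0:ℝ) T,
          ((∫ x, ft x s * Lf θ f g x s)
            + (∫ p : ℝ × ℝ, θt (p.1 - p.2) * f p.1 s * f p.2 s *
                (2 * g ((p.1 + p.2) / 2) s - g p.1 s - g p.2 s))
            - ∫ r in Ioc (0:ℝ) T, (if s < r then Ef θ θt f ft g s r else 0)) :=
        setIntegral_congr_fun measurableSet_Ioc fun s hs => hmain s hs
    _ = ((∫ s in Ioc (0:ℝ) T, ∫ x, ft x s * Lf θ f g x s)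
          + ∫ s in Ioc (0:ℝ) T, ∫ p : ℝ × ℝ, θt (p.1 - p.2) * f p.1 s * f p.2 s *
              (2 * g ((p.1 + p.2) / 2) s - g p.1 s - g p.2 s))
        - ∫ s in Ioc (0:ℝ) T,
            ∫ r in Ioc (0:ℝ) T, (if s < r then Ef θ θt f ft g s r else 0) := by
        have hABint : IntegrableOn (fun s =>
            (∫ x, ft x s * Lf θ f g x s)
            + ∫ p : ℝ × ℝ, θt (p.1 - p.2) * f p.1 s * f p.2 s *
                (2 * g ((p.1 + p.2) / 2) s - g p.1 s - g p.2 s)) (Ioc (0:ℝ) T) :=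
          hAint.add hBint
        have e1 : (∫ s in Ioc (0:ℝ) T, (((∫ x, ft x s * Lf θ f g x s)
              + ∫ p : ℝ × ℝ, θt (p.1 - p.2) * f p.1 s * f p.2 s *
                  (2 * g ((p.1 + p.2) / 2) s - g p.1 s - g p.2 s))
              - ∫ r in Ioc (0:ℝ) T, (if s < r then Ef θ θt f ft g s r else 0)))
            = (∫ s in Ioc (0:ℝ) T, ((∫ x, ft x s * Lf θ f g x s)
              + ∫ p : ℝ × ℝ, θt (p.1 - p.2) * f p.1 s * f p.2 s *
                  (2 * g ((p.1 + p.2) / 2) s - g p.1 s - g p.2 s)))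
              - ∫ s in Ioc (0:ℝ) T, ∫ r in Ioc (0:ℝ) T,
                  (if s < r then Ef θ θt f ft g s r else 0) :=
          integral_sub hABint hWint
        have e2 : (∫ s in Ioc (0:ℝ) T, ((∫ x, ft x s * Lf θ f g x s)
              + ∫ p : ℝ × ℝ, θt (p.1 - p.2) * f p.1 s * f p.2 s *
                  (2 * g ((p.1 + p.2) / 2) s - g p.1 s - g p.2 s)))
            = (∫ s in Ioc (0:ℝ) T, ∫ x, ft x s * Lf θ f g x s)
              + ∫ s in Ioc (0:ℝ) T, ∫ p : ℝ × ℝ, θt (p.1 - p.2) * f p.1 s * f p.2 s *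
                  (2 * g ((p.1 + p.2) / 2) s - g p.1 s - g p.2 s) :=
          integral_add hAint hBint
        rw [e1, e2]
    _ = ∫ s in Ioc (0:ℝ) T, ∫ p : ℝ × ℝ, θt (p.1 - p.2) * f p.1 s * f p.2 s *
          (2 * g ((p.1 + p.2) / 2) s - g p.1 s - g p.2 s) := by
        rw [hW_eq_A]; ring
    _ = ∫ s in (0:ℝ)..T, ∫ p : ℝ × ℝ, θt (p.1 - p.2) * f p.1 s * f p.2 s *
          (2 * g ((p.1 + p.2) / 2) s - g p.1 s - g p.2 s) :=
        (intervalIntegral.integral_of_le hT.le).symm
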